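/- For any two probability density functions f, g on [0,1] (with respect to a common dominating measure λ), the difference of their means satisfies |∫ y f(y) dλ(y) − ∫ y g(y) dλ(y)| ≤ √( (∫ y f(y) dλ + ∫ y g(y) dλ) · ∫ (f(y)−g(y))²/(f(y)+g(y)) dλ(y) ). -/

import Mathlib

open MeasureTheory

/-- Inequality (△₁): for densities `f, g` on `[0,1]` w.r.t. a dominating measure `μ`,
`|f̄ − ḡ| ≤ √((f̄ + ḡ) · D△(f‖g))`. -/
theorem tri_disc_ineq_one (μ : Measure ℝ) (f g : ℝ → ℝ)
    (hsupp : μ (Set.Icc (0:ℝ) 1)ᶜ = 0)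
    (hf0 : ∀ y, 0 ≤ f y) (hg0 : ∀ y, 0 ≤ g y)
    (hfi : Integrable f μ) (hgi : Integrable g μ)
    (hf1 : ∫ y, f y ∂μ = 1) (hg1 : ∫ y, g y ∂μ = 1)
    (hmf : Integrable (fun y => y * f y) μ) (hmg : Integrable (fun y => y * g y) μ)
    (hD : Integrable (fun y => (f y - g y) ^ 2 / (f y + g y)) μ) :
    |(∫ y, y * f y ∂μ) - ∫ y, y * g y ∂μ| ≤
      Real.sqrt (((∫ y, y * f y ∂μ) + ∫ y, y * g y ∂μ) *
        ∫ y, (f y - g y) ^ 2 / (f y + g y) ∂μ) := by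
  -- a.e. y ∈ [0,1]
  have hae : ∀ᵐ y ∂μ, y ∈ Set.Icc (0:ℝ) 1 := by
    rw [ae_iff]
    simpa [Set.compl_def] using hsupp
  set u : ℝ → ℝ := fun y => Real.sqrt (y * (f y + g y)) with hu
  set v : ℝ → ℝ := fun y => |y * (f y - g y)| / Real.sqrt (y * (f y + g y)) with hv
  have hfm := hfi.1
  have hgm := hgi.1
  have hum : AEStronglyMeasurable u μ :=
    (Real.continuous_sqrt.comp_aestronglyMeasurable
      (aestronglyMeasurable_id.mul (hfm.add hgm)))
  have hvm : AEStronglyMeasurable v μ :=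
    ((aestronglyMeasurable_id.mul (hfm.sub hgm)).norm.aemeasurable.div
      hum.aemeasurable).aestronglyMeasurable
  have hu0 : ∀ y, 0 ≤ u y := fun y => Real.sqrt_nonneg _
  have hv0 : ∀ y, 0 ≤ v y := fun y => div_nonneg (abs_nonneg _) (Real.sqrt_nonneg _)
  -- u^2 = y(f+g) a.e.
  have husq : ∀ᵐ y ∂μ, u y ^ 2 = y * (f y + g y) := by
    filter_upwards [hae] with y hy
    exact Real.sq_sqrt (mul_nonneg hy.1 (add_nonneg (hf0 y) (hg0 y)))
  -- v^2 = y * (f-g)^2/(f+g) a.e.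
  have hvsq : ∀ᵐ y ∂μ, v y ^ 2 = y * ((f y - g y) ^ 2 / (f y + g y)) := by
    filter_upwards [hae] with y hy
    rcases eq_or_lt_of_le (add_nonneg (hf0 y) (hg0 y)) with h | h
    · have hfy : f y = 0 := by nlinarith [hf0 y, hg0 y]
      have hgy : g y = 0 := by nlinarith [hf0 y, hg0 y]
      simp [hv, hfy, hgy]
    rcases eq_or_lt_of_le hy.1 with h0 | h0
    · simp [hv, ← h0]
    · have hpos : 0 < y * (f y + g y) := mul_pos h0 h
      rw [hv]
      rw [div_pow, sq_abs, Real.sq_sqrt hpos.le, mul_pow]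
      field_simp
  -- integrability of u^2
  have hiu : Integrable (fun y => u y ^ 2) μ := by
    refine (hmf.add hmg).congr ?_
    filter_upwards [husq] with y h
    simp only [Pi.add_apply]
    rw [h]; ring
  -- integrability of v^2
  have hiv : Integrable (fun y => v y ^ 2) μ := by
    refine hD.mono (hvm.pow 2) ?_
    filter_upwards [hae, hvsq] with y hy h
    have h1 : 0 ≤ (f y - g y) ^ 2 / (f y + g y) :=
      div_nonneg (sq_nonneg _) (add_nonneg (hf0 y) (hg0 y))
    rw [Real.norm_eq_abs, Real.norm_eq_abs, h, abs_of_nonneg (mul_nonneg hy.1 h1),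
      abs_of_nonneg h1]
    nlinarith [mul_nonneg (sub_nonneg.2 hy.2) h1]
  have hmemu : MemLp u 2 μ := (memLp_two_iff_integrable_sq hum).2 hiu
  have hmemv : MemLp v 2 μ := (memLp_two_iff_integrable_sq hvm).2 hiv
  -- Cauchy–Schwarz
  have hcs : ∫ y, u y * v y ∂μ ≤
      (∫ y, u y ^ (2:ℝ) ∂μ) ^ (1/(2:ℝ)) * (∫ y, v y ^ (2:ℝ) ∂μ) ^ (1/(2:ℝ)) := by
    refine integral_mul_le_Lp_mul_Lq_of_nonneg Real.HolderConjugate.two_two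
      (Filter.Eventually.of_forall hu0) (Filter.Eventually.of_forall hv0) ?_ ?_
    · simpa using hmemu
    · simpa using hmemv
  -- u*v = |y*(f-g)| a.e.
  have huv : ∀ᵐ y ∂μ, u y * v y = |y * (f y - g y)| := by
    filter_upwards [hae] with y hy
    rcases eq_or_lt_of_le (mul_nonneg hy.1 (add_nonneg (hf0 y) (hg0 y))) with h | h
    · have : y * (f y - g y) = 0 := by
        rcases mul_eq_zero.1 h.symm with h0 | h0
        · simp [h0]
        · have hfy : f y = 0 := by nlinarith [hf0 y, hg0 y]
          have hgy : g y = 0 := by nlinarith [hf0 y, hg0 y]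
          simp [hfy, hgy]
      simp [hu, hv, this, ← h]
    · have hs : Real.sqrt (y * (f y + g y)) ≠ 0 :=
        ne_of_gt (Real.sqrt_pos.2 h)
      simp only [hu, hv]
      rw [mul_comm, div_mul_cancel₀ _ hs]
  -- integral computations
  have key : |(∫ y, y * f y ∂μ) - ∫ y, y * g y ∂μ| ≤ ∫ y, u y * v y ∂μ := by
    rw [← integral_sub hmf hmg]
    calc |∫ y, (y * f y - y * g y) ∂μ| ≤ ∫ y, |y * f y - y * g y| ∂μ := by
          simpa [Real.norm_eq_abs] using
            norm_integral_le_integral_norm (fun y => y * f y - y * g y) (μ := μ)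
      _ = ∫ y, u y * v y ∂μ := by
          refine integral_congr_ae ?_
          filter_upwards [huv] with y h
          rw [h]; ring_nf
  have hIu : ∫ y, u y ^ (2:ℝ) ∂μ = (∫ y, y * f y ∂μ) + ∫ y, y * g y ∂μ := by
    rw [← integral_add hmf hmg]
    refine integral_congr_ae ?_
    filter_upwards [husq] with y h
    rw [show (u y) ^ (2:ℝ) = u y ^ 2 by
      rw [show (2:ℝ) = ((2:ℕ):ℝ) by norm_num, Real.rpow_natCast], h]
    ring
  have hIv : ∫ y, v y ^ (2:ℝ) ∂μ ≤ ∫ y, (f y - g y) ^ 2 / (f y + g y) ∂μ := by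
    have hivr : Integrable (fun y => v y ^ (2:ℝ)) μ := by
      refine hiv.congr ?_
      filter_upwards with y
      rw [show (2:ℝ) = ((2:ℕ):ℝ) by norm_num, Real.rpow_natCast]
    refine integral_mono_ae hivr hD ?_
    filter_upwards [hae, hvsq] with y hy h
    rw [show (v y) ^ (2:ℝ) = v y ^ 2 by
      rw [show (2:ℝ) = ((2:ℕ):ℝ) by norm_num, Real.rpow_natCast], h]
    have h1 : 0 ≤ (f y - g y) ^ 2 / (f y + g y) :=
      div_nonneg (sq_nonneg _) (add_nonneg (hf0 y) (hg0 y))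
    nlinarith [mul_nonneg (sub_nonneg.2 hy.2) h1]
  have hIv0 : 0 ≤ ∫ y, v y ^ (2:ℝ) ∂μ :=
    integral_nonneg fun y => Real.rpow_nonneg (hv0 y) _
  have hIu0 : 0 ≤ ∫ y, u y ^ (2:ℝ) ∂μ :=
    integral_nonneg fun y => Real.rpow_nonneg (hu0 y) _
  calc |(∫ y, y * f y ∂μ) - ∫ y, y * g y ∂μ| ≤ ∫ y, u y * v y ∂μ := key
    _ ≤ (∫ y, u y ^ (2:ℝ) ∂μ) ^ (1/(2:ℝ)) * (∫ y, v y ^ (2:ℝ) ∂μ) ^ (1/(2:ℝ)) := hcs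
    _ = Real.sqrt (∫ y, u y ^ (2:ℝ) ∂μ) * Real.sqrt (∫ y, v y ^ (2:ℝ) ∂μ) := by
        rw [Real.sqrt_eq_rpow, Real.sqrt_eq_rpow]
    _ = Real.sqrt ((∫ y, u y ^ (2:ℝ) ∂μ) * ∫ y, v y ^ (2:ℝ) ∂μ) :=
        (Real.sqrt_mul hIu0 _).symm
    _ ≤ Real.sqrt (((∫ y, y * f y ∂μ) + ∫ y, y * g y ∂μ) *
          ∫ y, (f y - g y) ^ 2 / (f y + g y) ∂μ) := by
        apply Real.sqrt_le_sqrt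
        rw [hIu]
        exact mul_le_mul_of_nonneg_left hIv (hIu ▸ hIu0)
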